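/- Let G be a simple graph on n vertices with a dominating vertex x. Then for any time t, the off-diagonal transition probability from x satisfies P_{G,t}^x(y) ≤ 4/n^2 for all y ≠ x, and hence the probability of being away from x satisfies Σ_{y≠x} P_{G,t}^x(y) ≤ 4/n. -/

import Mathlib

open Matrix Finset

/-- CTQW transition probability on a finite simple graph. -/
noncomputable def ctqwP {V : Type*} [Fintype V] [DecidableEq V]
    (G : SimpleGraph V) [DecidableRel G.Adj] (t : ℝ) (x y : V) : ℝ :=
  ‖(NormedSpace.exp ((Complex.I * t) • (G.lapMatrix ℂ))) x y‖ ^ 2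

section aux

attribute [local instance] Matrix.linftyOpNormedRing Matrix.linftyOpNormedAlgebra

set_option maxHeartbeats 8000000 in
lemma exp_mulVec_eigen {n : ℕ} (A : Matrix (Fin n) (Fin n) ℂ) (v : Fin n → ℂ) (c : ℂ)
    (h : A *ᵥ v = c • v) :
    NormedSpace.exp A *ᵥ v = Complex.exp c • v := by
  have hpow : ∀ k : ℕ, A ^ k *ᵥ v = c ^ k • v := by
    intro k
    induction k with
    | zero => simp
    | succ k ih =>
      rw [pow_succ, ← mulVec_mulVec, h, mulVec_smul, ih, smul_smul, pow_succ, mul_comm]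
  let T : Matrix (Fin n) (Fin n) ℂ →ₗ[ℂ] (Fin n → ℂ) :=
    { toFun := fun B => B *ᵥ v
      map_add' := fun B C => Matrix.add_mulVec B C v
      map_smul' := fun a B => Matrix.smul_mulVec a B v }
  have hTc : Continuous T := T.continuous_of_finiteDimensional
  have hs : Summable (fun k : ℕ => (Nat.factorial k : ℂ)⁻¹ • A ^ k) :=
    NormedSpace.expSeries_summable' A
  have hsc : Summable (fun k : ℕ => (Nat.factorial k : ℂ)⁻¹ * c ^ k) := by
    simpa [smul_eq_mul] using NormedSpace.expSeries_summable' (𝕂 := ℂ) c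
  have hmap : T (∑' k : ℕ, (Nat.factorial k : ℂ)⁻¹ • A ^ k)
      = ∑' k : ℕ, T ((Nat.factorial k : ℂ)⁻¹ • A ^ k) :=
    (hs.hasSum.map T.toAddMonoidHom hTc).tsum_eq.symm
  calc NormedSpace.exp A *ᵥ v
      = T (∑' k : ℕ, (Nat.factorial k : ℂ)⁻¹ • A ^ k) := by
        rw [NormedSpace.exp_eq_tsum (𝕂 := ℂ)]
        rfl
    _ = ∑' k : ℕ, T ((Nat.factorial k : ℂ)⁻¹ • A ^ k) := hmap
    _ = ∑' k : ℕ, ((Nat.factorial k : ℂ)⁻¹ * c ^ k) • v := by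
        refine tsum_congr fun k => ?_
        show ((Nat.factorial k : ℂ)⁻¹ • A ^ k) *ᵥ v = _
        rw [Matrix.smul_mulVec, hpow, smul_smul]
    _ = (∑' k : ℕ, (Nat.factorial k : ℂ)⁻¹ * c ^ k) • v := Summable.tsum_smul_const hsc v
    _ = Complex.exp c • v := by
        rw [Complex.exp_eq_exp_ℂ, NormedSpace.exp_eq_tsum (𝕂 := ℂ)]
        simp [smul_eq_mul]
end aux

/-- From a dominating vertex, each off-diagonal transition probability is at most `4/n²`,
and the total probability of being away from the start is at most `4/n`. -/
theorem ctqw_dominating_offdiag_bound (n : ℕ) (G : SimpleGraph (Fin n))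
    [DecidableRel G.Adj] (x : Fin n) (hx : G.degree x = n - 1) (t : ℝ) :
    (∀ y : Fin n, y ≠ x → ctqwP G t x y ≤ 4 / (n : ℝ) ^ 2) ∧
    ∑ y ∈ Finset.univ.erase x, ctqwP G t x y ≤ 4 / (n : ℝ) := by
  have hn : 0 < n := x.pos
  have hnR : (0:ℝ) < n := by exact_mod_cast hn
  -- x is adjacent to every other vertex
  have hNx : G.neighborFinset x = Finset.univ.erase x := by
    apply Finset.eq_of_subset_of_card_le
    · intro y hy
      rw [Finset.mem_erase]
      rw [SimpleGraph.mem_neighborFinset] at hy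
      exact ⟨(G.ne_of_adj hy).symm, Finset.mem_univ y⟩
    · rw [Finset.card_erase_of_mem (Finset.mem_univ x), Finset.card_univ, Fintype.card_fin,
        ← hx]
      exact le_of_eq (G.card_neighborFinset_eq_degree x).symm
  have hadj : ∀ y : Fin n, y ≠ x → G.Adj y x := by
    intro y hy
    have : y ∈ G.neighborFinset x := by
      rw [hNx, Finset.mem_erase]; exact ⟨hy, Finset.mem_univ y⟩
    exact ((SimpleGraph.mem_neighborFinset G x y).mp this).symm
  set L : Matrix (Fin n) (Fin n) ℂ := G.lapMatrix ℂ with hL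
  set M : Matrix (Fin n) (Fin n) ℂ := (Complex.I * t) • L with hM
  set ones : Fin n → ℂ := fun _ => 1 with hones
  set u : Fin n → ℂ := Pi.single x 1 - ((n:ℂ))⁻¹ • ones with hu
  have hnC : ((n:ℂ)) ≠ 0 := by exact_mod_cast hn.ne'
  -- L applied to the standard basis vector at x
  have hLe : L *ᵥ Pi.single x 1 = (n : ℂ) • (Pi.single x 1 : Fin n → ℂ) - ones := by
    ext y
    rw [SimpleGraph.lapMatrix_mulVec_apply]
    by_cases hyx : y = x
    · subst hyx
      have hsum : ∑ v ∈ G.neighborFinset y, (Pi.single y (1:ℂ)) v = 0 := by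
        apply Finset.sum_eq_zero
        intro v hv
        rw [SimpleGraph.mem_neighborFinset] at hv
        exact Pi.single_eq_of_ne (G.ne_of_adj hv).symm 1
      simp only [hsum, Pi.single_eq_same, hx, Pi.sub_apply, Pi.smul_apply, hones,
        smul_eq_mul, mul_one, sub_zero]
      have : (1:ℕ) ≤ n := hn
      push_cast [Nat.cast_sub this]
      ring
    · have hsum : ∑ v ∈ G.neighborFinset y, (Pi.single x (1:ℂ)) v = 1 := by
        rw [Finset.sum_eq_single_of_mem x]
        · exact Pi.single_eq_same x 1
        · rw [SimpleGraph.mem_neighborFinset]; exact hadj y hyx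
        · intro b _ hb; exact Pi.single_eq_of_ne hb 1
      simp [hsum, Pi.single_eq_of_ne hyx, hones]
  have hLones : L *ᵥ ones = 0 := G.lapMatrix_mulVec_const_eq_zero
  -- eigenvector computations for M
  have hMu : M *ᵥ u = (Complex.I * t * n) • u := by
    rw [hM, Matrix.smul_mulVec, hu, Matrix.mulVec_sub, hLe, Matrix.mulVec_smul, hLones]
    ext y
    simp only [Pi.smul_apply, Pi.sub_apply, smul_eq_mul, Pi.zero_apply]
    field_simp
    ring
  have hMones : M *ᵥ ones = (0:ℂ) • ones := by
    rw [hM, Matrix.smul_mulVec, hLones]; simp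
  have hexpu := exp_mulVec_eigen M u _ hMu
  have hexpones := exp_mulVec_eigen M ones _ hMones
  rw [Complex.exp_zero, one_smul] at hexpones
  -- column x of exp M
  have hcol : ∀ y : Fin n, y ≠ x →
      (NormedSpace.exp M) y x = ((n:ℂ))⁻¹ - Complex.exp (Complex.I * t * n) * ((n:ℂ))⁻¹ := by
    intro y hy
    have hsingle : (Pi.single x (1:ℂ)) = u + ((n:ℂ))⁻¹ • ones := by
      rw [hu]; ring_nf
    have := congrFun (Matrix.mulVec_single_one (NormedSpace.exp M) x) y
    rw [hsingle, Matrix.mulVec_add, Matrix.mulVec_smul, hexpu, hexpones] at this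
    rw [Matrix.col_apply] at this
    rw [← this]
    simp only [Pi.add_apply, Pi.smul_apply, hu, Pi.sub_apply, Pi.single_eq_of_ne hy,
      hones, smul_eq_mul, mul_one]
    ring
  -- symmetry
  have hsymm : (NormedSpace.exp M).IsSymm := by
    apply Matrix.IsSymm.exp
    rw [hM]
    exact (G.isSymm_lapMatrix (R := ℂ)).smul _
  -- entry bound
  have hentry : ∀ y : Fin n, y ≠ x →
      ‖(NormedSpace.exp M) x y‖ ≤ 2 / n := by
    intro y hy
    have h1 : (NormedSpace.exp M) x y = (NormedSpace.exp M) y x := by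
      conv_lhs => rw [← hsymm]
      rfl
    rw [h1, hcol y hy]
    have habs : ‖Complex.exp (Complex.I * t * n)‖ = 1 := by
      rw [Complex.norm_exp]
      simp [Complex.mul_re]
    calc ‖((n:ℂ))⁻¹ - Complex.exp (Complex.I * t * n) * ((n:ℂ))⁻¹‖
        ≤ ‖((n:ℂ))⁻¹‖ + ‖Complex.exp (Complex.I * t * n) * ((n:ℂ))⁻¹‖ :=
          norm_sub_le _ _
      _ = 1/n + 1/n := by
          rw [norm_mul, habs, one_mul, norm_inv, Complex.norm_natCast]
          ring
      _ = 2 / n := by ring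
  have hbound : ∀ y : Fin n, y ≠ x → ctqwP G t x y ≤ 4 / (n : ℝ) ^ 2 := by
    intro y hy
    have h2 := hentry y hy
    have h0 : (0:ℝ) ≤ ‖(NormedSpace.exp M) x y‖ := norm_nonneg _
    have : ctqwP G t x y = ‖(NormedSpace.exp M) x y‖ ^ 2 := rfl
    rw [this]
    calc ‖(NormedSpace.exp M) x y‖ ^ 2 ≤ (2 / n) ^ 2 := by
          exact pow_le_pow_left₀ h0 h2 2
      _ = 4 / (n:ℝ)^2 := by ring
  refine ⟨hbound, ?_⟩
  calc ∑ y ∈ Finset.univ.erase x, ctqwP G t x y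
      ≤ ∑ y ∈ Finset.univ.erase x, 4 / (n:ℝ)^2 := by
        apply Finset.sum_le_sum
        intro y hy
        exact hbound y (Finset.mem_erase.mp hy).1
    _ = (n - 1 : ℕ) * (4 / (n:ℝ)^2) := by
        rw [Finset.sum_const, Finset.card_erase_of_mem (Finset.mem_univ x),
          Finset.card_univ, Fintype.card_fin, nsmul_eq_mul]
    _ ≤ n * (4 / (n:ℝ)^2) := by
        apply mul_le_mul_of_nonneg_right
        · exact_mod_cast Nat.sub_le n 1
        · positivity
    _ = 4 / n := by field_simp
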